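/- arXiv:math/0702666 — 3 statements merged into one kernel-verified Lean document; each statement's English description precedes it below -/
import Mathlib

section
/- Let F be the free group on generators a₁, …, a_s, R a finite set of relators each of which is a product of generators r = a_{i₁}⋯a_{i_p}, and π = ⟨a₁,…,a_s | R⟩ the presented group. Let ρ : π → kˣ be a group homomorphism and for each r ∈ R let λ_r : k^s → k be the linear form λ_r(t) = Σ_{μ=1}^{p} (Π_{ν<μ} ρ(a_{i_ν})) · t_{i_μ}. Then the first cohomology group H¹(π, k_ρ) is k-linearly isomorphic to the quotient of the subspace {t ∈ k^s : λ_r(t) = 0 for all r ∈ R} by the line k · (ρ(a₁) − 1, …, ρ(a_s) − 1). -/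
/-- The space `Z¹(π, k_ρ)` of 1-cocycles, as a `k`-submodule of `π → k`. -/
def Z1 (k : Type*) [Field k] {π : Type*} [Group π] (ρ : π →* kˣ) :
    Submodule k (π → k) where
  carrier := {σ | ∀ γ₁ γ₂ : π, σ (γ₁ * γ₂) = σ γ₁ + (ρ γ₁ : k) * σ γ₂}
  zero_mem' := by intro γ₁ γ₂; simp
  add_mem' := by
    intro a b ha hb γ₁ γ₂
    simp only [Pi.add_apply, ha γ₁ γ₂, hb γ₁ γ₂]
    ring
  smul_mem' := by
    intro c a ha γ₁ γ₂
    simp only [Pi.smul_apply, smul_eq_mul, ha γ₁ γ₂]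
    ring

/-- The space `B¹(π, k_ρ)` of 1-coboundaries, as a `k`-submodule of `π → k`. -/
def B1 (k : Type*) [Field k] {π : Type*} [Group π] (ρ : π →* kˣ) :
    Submodule k (π → k) where
  carrier := {σ | ∃ a : k, ∀ γ : π, σ γ = (ρ γ : k) * a - a}
  zero_mem' := ⟨0, by simp⟩
  add_mem' := by
    rintro f g ⟨a, ha⟩ ⟨b, hb⟩
    exact ⟨a + b, fun γ => by simp only [Pi.add_apply, ha γ, hb γ]; ring⟩
  smul_mem' := by
    rintro c f ⟨a, ha⟩
    exact ⟨c * a, fun γ => by simp only [Pi.smul_apply, smul_eq_mul, ha γ]; ring⟩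

/-- The first cohomology group `H¹(π, k_ρ) = Z¹(π, k_ρ)/B¹(π, k_ρ)`. -/
abbrev H1 (k : Type*) [Field k] {π : Type*} [Group π] (ρ : π →* kˣ) :=
  Z1 k ρ ⧸ (B1 k ρ).comap (Z1 k ρ).subtype

lemma Iio_succ_fin {n : ℕ} (μ : Fin n) :
    Finset.Iio μ.succ = insert (0 : Fin (n+1)) ((Finset.Iio μ).map ⟨Fin.succ, Fin.succ_injective n⟩) := by
  ext ν
  simp only [Finset.mem_Iio, Finset.mem_insert, Finset.mem_map, Function.Embedding.coeFn_mk]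
  cases ν using Fin.cases with
  | zero => simp [Fin.succ_pos]
  | succ x => simp [Fin.succ_lt_succ_iff, Fin.succ_inj, Fin.succ_ne_zero, eq_comm]

lemma prod_Iio_succ_fin {M : Type*} [CommMonoid M] {n : ℕ} (f : Fin (n+1) → M) (μ : Fin n) :
    ∏ ν ∈ Finset.Iio μ.succ, f ν = f 0 * ∏ ν ∈ Finset.Iio μ, f ν.succ := by
  rw [Iio_succ_fin, Finset.prod_insert (by simp [Fin.succ_ne_zero]), Finset.prod_map]
  rfl

lemma cocycle_one {k : Type*} [Field k] {π : Type*} [Group π] (ρ : π →* kˣ) {σ : π → k}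
    (hσ : ∀ γ₁ γ₂ : π, σ (γ₁ * γ₂) = σ γ₁ + (ρ γ₁ : k) * σ γ₂) : σ 1 = 0 := by
  simpa using hσ 1 1

lemma cocycle_list {k : Type*} [Field k] {π ι : Type*} [Group π] (ρ : π →* kˣ) {σ : π → k}
    (hσ : ∀ γ₁ γ₂ : π, σ (γ₁ * γ₂) = σ γ₁ + (ρ γ₁ : k) * σ γ₂) (g : ι → π) :
    ∀ l : List ι, σ ((l.map g).prod) =
      ∑ μ : Fin l.length,
        (∏ ν ∈ Finset.Iio μ, (ρ (g (l.get ν)) : k)) * σ (g (l.get μ)) := by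
  intro l
  induction l with
  | nil => simp [cocycle_one ρ hσ]
  | cons a l ih =>
    rw [List.map_cons, List.prod_cons, hσ, ih]
    simp only [List.length_cons]
    rw [Fin.sum_univ_succ]
    congr 1
    · rw [show Finset.Iio (0 : Fin (l.length + 1)) = ∅ by ext x; simp, Finset.prod_empty,
        one_mul]
      rfl
    · rw [Finset.mul_sum]
      refine Finset.sum_congr rfl fun μ _ => ?_
      rw [prod_Iio_succ_fin (fun ν => (ρ (g ((a :: l).get ν)) : k)) μ]
      simp [mul_assoc]

/-- The action of `kˣ` on `Multiplicative k` by scaling, as a homomorphism into `MulAut`. -/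
def affAct (k : Type*) [Field k] : kˣ →* MulAut (Multiplicative k) where
  toFun u :=
    { toFun := fun x => Multiplicative.ofAdd ((u : k) * x.toAdd)
      invFun := fun x => Multiplicative.ofAdd (((u⁻¹ : kˣ) : k) * x.toAdd)
      left_inv := fun x => by
        simp [← mul_assoc, ← Units.val_mul]
      right_inv := fun x => by
        simp [← mul_assoc, ← Units.val_mul]
      map_mul' := fun x y => by
        simp [mul_add, ← ofAdd_add] }
  map_one' := by ext x; simp
  map_mul' := fun u v => by ext x; simp [mul_assoc]

lemma affAct_apply {k : Type*} [Field k] (u : kˣ) (x : Multiplicative k) :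
    (affAct k u x).toAdd = (u : k) * x.toAdd := rfl

/-- A homomorphism into the affine group gives a cocycle. -/
lemma aff_cocycle {k : Type*} [Field k] {π : Type*} [Group π]
    (f : π →* SemidirectProduct (Multiplicative k) kˣ (affAct k)) (γ₁ γ₂ : π) :
    ((f (γ₁ * γ₂)).left).toAdd =
      ((f γ₁).left).toAdd + ((SemidirectProduct.rightHom (f γ₁) : kˣ) : k) * ((f γ₂).left).toAdd := by
  rw [map_mul, SemidirectProduct.mul_left]
  simp [affAct_apply]


/-- Cocycle identity for left components in the affine group. -/
lemma aff_mul_left {k : Type*} [Field k] (x y : SemidirectProduct (Multiplicative k) kˣ (affAct k)) :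
    ((x * y).left).toAdd =
      (x.left).toAdd + ((SemidirectProduct.rightHom x : kˣ) : k) * (y.left).toAdd := by
  rw [SemidirectProduct.mul_left]
  simp [affAct_apply]

/-- For a presented group `π = ⟨a₁,…,a_s | R⟩` with each relator a
product of generators (recorded as a list of indices) and a homomorphism
`ρ : π → kˣ`, the first cohomology `H¹(π, k_ρ)` is `k`-linearly isomorphic to the
quotient of `{t ∈ k^s : λ_r(t) = 0 for all r ∈ R}` by the line
`k · (ρ(a₁) − 1, …, ρ(a_s) − 1)`, where
`λ_r(t) = Σ_μ (Π_{ν<μ} ρ(a_{i_ν})) · t_{i_μ}` for `r = a_{i₁}⋯a_{i_p}`. -/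
theorem presented_H1_iso {k : Type*} [Field k] {s : ℕ}
    (R : Finset (List (Fin s)))
    (ρ : PresentedGroup {w : FreeGroup (Fin s) | ∃ l ∈ R, w = (l.map FreeGroup.of).prod} →* kˣ)
    (K : Submodule k (Fin s → k))
    (hK : ∀ t : Fin s → k, t ∈ K ↔ ∀ l ∈ R,
      ∑ μ : Fin l.length,
        (∏ ν ∈ Finset.Iio μ, (ρ (PresentedGroup.of (l.get ν)) : k)) * t (l.get μ) = 0)
    (L : Submodule k (Fin s → k))
    (hL : L = Submodule.span k {fun i : Fin s => (ρ (PresentedGroup.of i) : k) - 1}) :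
    Nonempty (H1 k ρ ≃ₗ[k] (K ⧸ (L.comap K.subtype))) := by
  let rels : Set (FreeGroup (Fin s)) :=
    {w : FreeGroup (Fin s) | ∃ l ∈ R, w = (l.map FreeGroup.of).prod}
  -- relators die in the presented group
  have hrel : ∀ l ∈ R,
      ((l.map (PresentedGroup.of (rels := rels))).prod : PresentedGroup rels) = 1 := by
    intro l hl
    have h1 : (l.map (PresentedGroup.of (rels := rels))).prod =
        QuotientGroup.mk' (Subgroup.normalClosure rels) ((l.map FreeGroup.of).prod) := by
      rw [map_list_prod, List.map_map]
      rfl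
    rw [h1]
    refine (QuotientGroup.eq_one_iff (N := Subgroup.normalClosure rels) _).mpr ?_
    exact Subgroup.subset_normalClosure ⟨l, hl, rfl⟩
  -- the linear map Z1 → K
  have memK : ∀ σ : Z1 k ρ, (fun i => σ.1 (PresentedGroup.of i)) ∈ K := by
    intro σ
    rw [hK]
    intro l hl
    rw [← cocycle_list ρ σ.2 PresentedGroup.of l, hrel l hl, cocycle_one ρ σ.2]
  let e0 : Z1 k ρ →ₗ[k] K :=
    { toFun := fun σ => ⟨fun i => σ.1 (PresentedGroup.of i), memK σ⟩
      map_add' := fun σ τ => rfl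
      map_smul' := fun c σ => rfl }
  -- injectivity
  have hinj : Function.Injective e0 := by
    rw [injective_iff_map_eq_zero]
    intro σ hσ0
    have hz : ∀ i, σ.1 (PresentedGroup.of i) = 0 := fun i => congrFun (congrArg Subtype.val hσ0) i
    ext γ
    have hγ : γ ∈ Subgroup.closure (Set.range (PresentedGroup.of (rels := rels))) := by
      rw [PresentedGroup.closure_range_of]; trivial
    show σ.1 γ = 0
    induction hγ using Subgroup.closure_induction with
    | mem x hx => obtain ⟨i, rfl⟩ := hx; exact hz i
    | one => exact cocycle_one ρ σ.2
    | mul x y hx hy ihx ihy => rw [σ.2 x y, ihx, ihy]; ring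
    | inv x hx ihx =>
      have h := σ.2 x x⁻¹
      rw [mul_inv_cancel, cocycle_one ρ σ.2, ihx, zero_add] at h
      exact (Units.mul_right_eq_zero (ρ x)).mp h.symm
  -- surjectivity
  have hsurj : Function.Surjective e0 := by
    rintro ⟨t, ht⟩
    set f : Fin s → SemidirectProduct (Multiplicative k) kˣ (affAct k) :=
      fun i => ⟨Multiplicative.ofAdd (t i), ρ (PresentedGroup.of i)⟩ with hf
    have hlift : ∀ r ∈ rels, FreeGroup.lift f r = 1 := by
      rintro r ⟨l, hl, rfl⟩
      rw [map_list_prod, List.map_map]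
      have hcomp : (FreeGroup.lift f) ∘ FreeGroup.of = f := by
        funext i; simp
      rw [hcomp]
      apply SemidirectProduct.ext
      · -- left component
        have := cocycle_list (π := SemidirectProduct (Multiplicative k) kˣ (affAct k))
          (σ := fun x => (x.left).toAdd) SemidirectProduct.rightHom
          (fun x y => aff_mul_left x y) f l
        have hz := (hK t).mp ht l hl
        have heq : ((List.map f l).prod.left).toAdd = 0 := by
          rw [this]; exact hz
        rw [SemidirectProduct.one_left]
        exact toAdd_eq_zero.mp heq
      · -- right component
        show SemidirectProduct.rightHom (φ := affAct k) (List.map f l).prod =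
            SemidirectProduct.rightHom (φ := affAct k) 1
        rw [map_list_prod, List.map_map, map_one]
        have hcomp2 : (SemidirectProduct.rightHom (φ := affAct k)) ∘ f =
            (fun i => ρ (PresentedGroup.of i)) := rfl
        rw [hcomp2]
        have : (List.map (fun i => ρ (PresentedGroup.of i)) l).prod =
            ρ ((l.map (PresentedGroup.of (rels := rels))).prod) := by
          rw [map_list_prod, List.map_map]; rfl
        rw [this, hrel l hl, map_one]
    set T := PresentedGroup.toGroup hlift with hT
    have hright : ∀ γ, (T γ).right = ρ γ := by
      have : (SemidirectProduct.rightHom (φ := affAct k)).comp T = ρ := by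
        apply PresentedGroup.ext
        intro i
        show SemidirectProduct.rightHom (T (PresentedGroup.of i)) = ρ (PresentedGroup.of i)
        rw [hT, PresentedGroup.toGroup.of]
        rfl
      intro γ
      exact congrArg (fun φ => φ γ) this
    have hcoc : (fun γ => ((T γ).left).toAdd) ∈ Z1 k ρ := by
      intro γ₁ γ₂
      show ((T (γ₁ * γ₂)).left).toAdd = _
      rw [map_mul, aff_mul_left]
      rw [SemidirectProduct.rightHom_eq_right]
      simp only [hright]
    refine ⟨⟨fun γ => ((T γ).left).toAdd, hcoc⟩, ?_⟩
    apply Subtype.ext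
    funext i
    show ((T (PresentedGroup.of i)).left).toAdd = t i
    rw [hT, PresentedGroup.toGroup.of]
    rfl
  let e : Z1 k ρ ≃ₗ[k] K := LinearEquiv.ofBijective e0 ⟨hinj, hsurj⟩
  have hmap : ((B1 k ρ).comap (Z1 k ρ).subtype).map (e : Z1 k ρ →ₗ[k] K) = L.comap K.subtype := by
    ext x
    constructor
    · rintro ⟨σ, hσB, rfl⟩
      obtain ⟨a, ha⟩ := hσB
      simp only [Submodule.mem_comap]
      rw [hL]
      have hval : (↑(e σ) : Fin s → k) =
          a • (fun i : Fin s => (ρ (PresentedGroup.of i) : k) - 1) := by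
        funext i
        show σ.1 (PresentedGroup.of i) = _
        rw [show σ.1 (PresentedGroup.of i) =
          (ρ (PresentedGroup.of i) : k) * a - a from ha _]
        simp [mul_sub, mul_comm, smul_eq_mul]
      show (↑(e σ) : Fin s → k) ∈ _
      rw [hval]
      exact Submodule.smul_mem _ a (Submodule.mem_span_singleton_self _)
    · intro hx
      simp only [Submodule.mem_comap] at hx
      rw [hL, Submodule.mem_span_singleton] at hx
      obtain ⟨a, ha⟩ := hx
      have hmem : (fun γ => (ρ γ : k) * a - a) ∈ Z1 k ρ := by
        intro γ₁ γ₂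
        simp only [map_mul, Units.val_mul]
        ring
      refine ⟨⟨_, hmem⟩, ⟨a, fun γ => rfl⟩, ?_⟩
      apply Subtype.ext
      funext i
      show (ρ (PresentedGroup.of i) : k) * a - a = x.1 i
      have ha' : a • (fun i : Fin s => (ρ (PresentedGroup.of i) : k) - 1) = (x : Fin s → k) := ha
      rw [← ha']
      simp [smul_eq_mul, mul_sub, mul_comm]
  exact ⟨Submodule.Quotient.equiv _ _ e hmap⟩
end

section
/- Let F_s be the free group on s ≥ 2 generators and let ρ : F_s → U(1) be a nontrivial group homomorphism. For τ ∈ Z¹(F_s, ℂ_ρ), let φ_τ : F_s → SE(2) be the homomorphism φ_τ(γ) = ((ρ(γ), τ(γ)), (0, 1)). Then the assignment τ ↦ [τ] ∈ H¹(F_s, ℂ_ρ) induces a bijection between the set of Sim(2)-conjugacy classes of homomorphisms φ : F_s → SE(2) whose character equals ρ and whose translation part is not a coboundary, and the projectivization ℙ(H¹(F_s, ℂ_ρ)) of the (s−1)-dimensional complex vector space H¹(F_s, ℂ_ρ); that is, φ_{τ₁} and φ_{τ₂} (with τ₁, τ₂ ∉ B¹) are Sim(2)-conjugate if and only if the nonzero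 classes [τ₁], [τ₂] span the same complex line in H¹(F_s, ℂ_ρ). -/
/-- Let `F_s` be the free group on `s ≥ 2` generators and
`ρ : F_s → U(1)` a nontrivial homomorphism. For cocycles `τ₁, τ₂ ∈ Z¹(F_s, ℂ_ρ)`
which are not coboundaries, let `φ_{τⱼ}(γ) = ((ρ(γ), τⱼ(γ)), (0, 1)) ∈ SE(2)`.
Then `φ_{τ₁}` and `φ_{τ₂}` are conjugate by an element of `Sim(2)` iff the nonzero
classes `[τ₁], [τ₂]` span the same complex line in `H¹(F_s, ℂ_ρ)`, i.e. iff there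
is `a ∈ ℂ*` with `[τ₂] = a·[τ₁]`, i.e. `τ₂ − a·τ₁ ∈ B¹(F_s, ℂ_ρ)`. (This is the
bijectivity of the induced map from `Sim(2)`-conjugacy classes of homomorphisms
`F_s → SE(2)` with character `ρ` and non-coboundary translation part onto the
projectivization `ℙ(H¹(F_s, ℂ_ρ))`.) -/
theorem SE2_conjugacy_classes_projective (s : ℕ) (hs : 2 ≤ s)
    (ρ τ₁ τ₂ : FreeGroup (Fin s) → ℂ)
    (hρu : ∀ γ, ‖ρ γ‖ = 1)
    (hρm : ∀ γ₁ γ₂, ρ (γ₁ * γ₂) = ρ γ₁ * ρ γ₂)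
    (hρnt : ∃ γ, ρ γ ≠ 1)
    (hτ₁ : ∀ γ₁ γ₂, τ₁ (γ₁ * γ₂) = τ₁ γ₁ + ρ γ₁ * τ₁ γ₂)
    (hτ₂ : ∀ γ₁ γ₂, τ₂ (γ₁ * γ₂) = τ₂ γ₁ + ρ γ₁ * τ₂ γ₂)
    (hτ₁nb : ¬ ∃ b : ℂ, ∀ γ, τ₁ γ = ρ γ * b - b)
    (hτ₂nb : ¬ ∃ b : ℂ, ∀ γ, τ₂ γ = ρ γ * b - b) :
    (∃ g : Matrix (Fin 2) (Fin 2) ℂ, g 0 0 ≠ 0 ∧ g 1 0 = 0 ∧ g 1 1 = 1 ∧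
        ∀ γ, !![ρ γ, τ₂ γ; 0, 1] = g * !![ρ γ, τ₁ γ; 0, 1] * g⁻¹) ↔
      ∃ a : ℂ, a ≠ 0 ∧ ∃ b : ℂ, ∀ γ, τ₂ γ = a * τ₁ γ + (ρ γ * b - b) := by

  constructor
  · rintro ⟨g, hg00, hg10, hg11, hg⟩
    have hdet : IsUnit g.det := by
      rw [Matrix.det_fin_two, hg10, hg11]
      simpa using hg00
    refine ⟨g 0 0, hg00, -(g 0 1), fun γ => ?_⟩
    have h := congrArg (· * g) (hg γ)
    simp only [Matrix.mul_assoc, Matrix.nonsing_inv_mul _ hdet, Matrix.mul_one] at h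
    have h01 := congrArg (fun M => M 0 1) h
    simp [Matrix.mul_apply, Fin.sum_univ_two, hg11] at h01
    linear_combination h01
  · rintro ⟨a, ha, b, hab⟩
    refine ⟨!![a, -b; 0, 1], by simpa using ha, by simp, by simp, fun γ => ?_⟩
    have hdet : IsUnit (!![a, -b; 0, (1:ℂ)]).det := by
      rw [Matrix.det_fin_two]; simpa using ha
    have key : !![ρ γ, τ₂ γ; 0, 1] * !![a, -b; 0, (1:ℂ)] =
        !![a, -b; 0, (1:ℂ)] * !![ρ γ, τ₁ γ; 0, 1] := by
      ext i j
      fin_cases i <;> fin_cases j <;>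
        simp [Matrix.mul_apply, Fin.sum_univ_two, hab γ] <;> ring
    rw [← key, Matrix.mul_nonsing_inv_cancel_right _ _ hdet]
end

section
/- Let PSL₂(ℝ) be the quotient of the group SL₂(ℝ) of 2×2 real matrices of determinant 1 by its center {±I}, equipped with the quotient topology. If Γ is a subgroup of PSL₂(ℝ) that is discrete (i.e. the subspace topology on Γ is discrete) and whose center Z(Γ) is nontrivial, then Γ is cyclic. Equivalently, the center of a discrete subgroup of PSL₂(ℝ) is trivial unless the subgroup is cyclic. -/
/-- `SL₂(ℝ)`: the group of 2×2 real matrices of determinant 1. -/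
abbrev SL2R := Matrix.SpecialLinearGroup (Fin 2) ℝ

/-- The topology on `SL₂(ℝ)` induced from the space of 2×2 real matrices. -/
instance : TopologicalSpace SL2R :=
  TopologicalSpace.induced (fun g : SL2R => (g : Matrix (Fin 2) (Fin 2) ℝ)) inferInstance

/-- `PSL₂(ℝ) = SL₂(ℝ)/{±I}`: the quotient of `SL₂(ℝ)` by its center, with the
quotient topology. -/
abbrev PSL2R := SL2R ⧸ Subgroup.center SL2R

abbrev M2 := Matrix (Fin 2) (Fin 2) ℝ

lemma entry_eq (P Q : M2) (h : P = Q) (i j : Fin 2) : P i j = Q i j := by rw [h]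

lemma sl_coe_mul (X Y : SL2R) : ((X * Y : SL2R) : M2) = (X : M2) * (Y : M2) := rfl

lemma mem_center_SL2 (g : SL2R) :
    g ∈ Subgroup.center SL2R ↔ ((g : M2) = 1 ∨ (g : M2) = -1) := by
  constructor
  · intro hg
    have hE1 : Matrix.det !![(1:ℝ),1;0,1] = 1 := by simp [Matrix.det_fin_two_of]
    have hE2 : Matrix.det !![(1:ℝ),0;1,1] = 1 := by simp [Matrix.det_fin_two_of]
    have h1 := Subgroup.mem_center_iff.mp hg ⟨_, hE1⟩
    have h2 := Subgroup.mem_center_iff.mp hg ⟨_, hE2⟩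
    have h1' : !![(1:ℝ),1;0,1] * (g : M2) = (g : M2) * !![(1:ℝ),1;0,1] := by
      have := congrArg (fun X : SL2R => (X : M2)) h1
      exact this
    have h2' : !![(1:ℝ),0;1,1] * (g : M2) = (g : M2) * !![(1:ℝ),0;1,1] := by
      have := congrArg (fun X : SL2R => (X : M2)) h2
      exact this
    have e1 := entry_eq _ _ h1' 0 0
    have e2 := entry_eq _ _ h1' 0 1
    have e3 := entry_eq _ _ h2' 0 0
    have e4 := entry_eq _ _ h2' 1 0
    simp [Matrix.mul_apply, Fin.sum_univ_two] at e1 e2 e3 e4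
    -- e1 : g00 + g10 = g00 ; e2 : g01 + g11 = g00 + g01 ; etc.
    have hdet := g.2
    rw [Matrix.det_fin_two] at hdet
    have hc : (g : M2) 1 0 = 0 := by linarith
    have hb : (g : M2) 0 1 = 0 := by linarith
    have had : (g : M2) 1 1 = (g : M2) 0 0 := by linarith
    have hsq : (g : M2) 0 0 ^ 2 = 1 := by
      rw [hc, hb, had] at hdet; nlinarith [hdet]
    rcases sq_eq_one_iff.mp hsq with h | h
    · left
      ext i j
      fin_cases i <;> fin_cases j <;> simp [Matrix.one_apply, h, hb, hc, had]
    · right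
      ext i j
      fin_cases i <;> fin_cases j <;> simp [Matrix.one_apply, h, hb, hc, had]
  · intro hg
    rw [Subgroup.mem_center_iff]
    intro k
    have : ((k * g : SL2R) : M2) = ((g * k : SL2R) : M2) := by
      rw [sl_coe_mul, sl_coe_mul]
      rcases hg with h | h <;> rw [h] <;> simp
    exact Subtype.ext this

lemma main_param (Γ : Subgroup PSL2R) [DiscreteTopology Γ]
    (ψ : ℝ → PSL2R) (hhom : ∀ s t, ψ (s + t) = ψ s * ψ t) (hcont : Continuous ψ)
    (ε : ℝ) (hε : 0 < ε) (hker : ∀ s, 0 < s → s < ε → ψ s ≠ 1)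
    (hcov : ∀ γ ∈ Γ, ∃ s, ψ s = γ) : IsCyclic Γ := by
  have hψ0 : ψ 0 = 1 := by
    have h := (hhom 0 0).symm
    rw [add_zero] at h
    exact (mul_eq_right.mp h)
  let Ψ : Multiplicative ℝ →* PSL2R :=
    { toFun := fun s => ψ (Multiplicative.toAdd s)
      map_one' := hψ0
      map_mul' := fun s t => hhom _ _ }
  let S : AddSubgroup ℝ :=
    { carrier := ψ ⁻¹' Γ
      add_mem' := fun {x y} hx hy => by
        simp only [Set.mem_preimage, SetLike.mem_coe] at *
        rw [hhom]; exact mul_mem hx hy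
      zero_mem' := by
        simp only [Set.mem_preimage, hψ0]; exact one_mem Γ
      neg_mem' := fun {x} hx => by
        simp only [Set.mem_preimage, SetLike.mem_coe] at *
        have : ψ (-x) = (ψ x)⁻¹ := by
          have h := hhom x (-x)
          rw [add_neg_cancel, hψ0] at h
          exact (eq_inv_of_mul_eq_one_right h.symm)
        rw [this]; exact inv_mem hx }
  rcases S.dense_or_cyclic with hd | ⟨a, ha⟩
  · exfalso
    have hopen : IsOpen ({1} : Set Γ) := isOpen_discrete _
    obtain ⟨U, hU, hU1⟩ := isOpen_induced_iff.mp hopen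
    have h1U : (1 : PSL2R) ∈ U := by
      have : (1 : Γ) ∈ Subtype.val ⁻¹' U := by rw [hU1]; rfl
      exact this
    have hV : IsOpen (ψ ⁻¹' U) := hcont.isOpen_preimage U hU
    have h0V : (0 : ℝ) ∈ ψ ⁻¹' U := by simp [hψ0, h1U]
    obtain ⟨δ, hδ, hball⟩ := Metric.isOpen_iff.mp hV 0 h0V
    have hW : IsOpen (Set.Ioo (0:ℝ) (min ε δ)) := isOpen_Ioo
    have hm : 0 < min ε δ := lt_min hε hδ
    have hWne : (Set.Ioo (0:ℝ) (min ε δ)).Nonempty :=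
      ⟨min ε δ / 2, Set.mem_Ioo.mpr ⟨by linarith, half_lt_self hm⟩⟩
    obtain ⟨s, hsS, hsW⟩ := hd.exists_mem_open hW hWne
    have hsV : s ∈ ψ ⁻¹' U := by
      apply hball
      simp only [Metric.mem_ball, Real.dist_eq, sub_zero]
      rw [abs_of_pos hsW.1]
      exact lt_of_lt_of_le hsW.2 (min_le_right _ _)
    have hsΓ : ψ s ∈ Γ := hsS
    have : (⟨ψ s, hsΓ⟩ : Γ) ∈ Subtype.val ⁻¹' U := hsV
    rw [hU1] at this
    have hone : ψ s = 1 := congrArg Subtype.val this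
    exact hker s hsW.1 (lt_of_lt_of_le hsW.2 (min_le_left _ _)) hone
  · have haS : a ∈ S := by rw [ha]; exact AddSubgroup.subset_closure rfl
    constructor
    refine ⟨⟨ψ a, haS⟩, ?_⟩
    intro x
    obtain ⟨s, hs⟩ := hcov x.1 x.2
    have hsS : s ∈ S := by
      show ψ s ∈ Γ
      rw [hs]; exact x.2
    rw [ha] at hsS
    obtain ⟨n, hn⟩ := AddSubgroup.mem_closure_singleton.mp hsS
    refine Subgroup.mem_zpowers_iff.mpr ⟨n, ?_⟩
    have key : ψ (n • a) = ψ a ^ n := by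
      have h1 : ψ (n • a) = Ψ (Multiplicative.ofAdd (n • a)) := rfl
      rw [h1, ofAdd_zsmul, map_zpow]
      rfl
    apply Subtype.ext
    show (ψ a) ^ n = x.1
    rw [← key, hn, hs]

lemma traceZero_sq (M : M2) (h : M.trace = 0) : M * M = (-M.det) • (1 : M2) := by
  rw [Matrix.trace_fin_two] at h
  rw [Matrix.det_fin_two]
  ext i j
  fin_cases i <;> fin_cases j <;>
    simp [Matrix.mul_apply, Fin.sum_univ_two, Matrix.one_apply]
  · linear_combination (M 0 0 : ℝ) * h
  · linear_combination (M 0 1 : ℝ) * h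
  · linear_combination (M 1 0 : ℝ) * h
  · linear_combination (M 1 1 : ℝ) * h

lemma det_comb (x y : ℝ) (M : M2) (h : M.trace = 0) :
    (x • (1:M2) + y • M).det = x^2 + y^2 * M.det := by
  rw [Matrix.trace_fin_two] at h
  rw [Matrix.det_fin_two, Matrix.det_fin_two]
  simp [Matrix.one_apply]
  linear_combination (x*y : ℝ) * h

lemma comb_mul (M : M2) (htr : M.trace = 0) (c1 d1 c2 d2 : ℝ) :
    (c1 • (1:M2) + d1 • M) * (c2 • (1:M2) + d2 • M)
      = (c1*c2 - d1*d2*M.det) • (1:M2) + (c1*d2 + d1*c2) • M := by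
  have h2 := traceZero_sq M htr
  simp only [add_mul, mul_add, smul_mul_assoc, mul_smul_comm, h2, one_mul, mul_one, smul_smul]
  module

lemma comb_scalar (M : M2) (hM : ¬∃ r : ℝ, M = r • (1:M2)) (c d u : ℝ)
    (h : c • (1:M2) + d • M = u • (1:M2)) : d = 0 := by
  by_contra hd
  apply hM
  refine ⟨(u - c)/d, ?_⟩
  have h1 : d • M = (u - c) • (1:M2) := by
    rw [sub_smul, ← h]; module
  have := congrArg (fun X : M2 => d⁻¹ • X) h1
  simpa [smul_smul, inv_mul_cancel₀ hd, div_eq_inv_mul] using this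

lemma param_case (Γ : Subgroup PSL2R) [DiscreteTopology Γ] (M : M2)
    (htr : M.trace = 0) (hMns : ¬∃ r : ℝ, M = r • (1:M2))
    (c d : ℝ → ℝ) (hc : Continuous c) (hd : Continuous d)
    (hdet : ∀ s, (c s)^2 + (d s)^2 * M.det = 1)
    (hc_add : ∀ s t, c (s+t) = c s * c t - d s * d t * M.det)
    (hd_add : ∀ s t, d (s+t) = c s * d t + d s * c t)
    (ε : ℝ) (hε : 0 < ε) (hker : ∀ s, 0 < s → s < ε → d s ≠ 0)
    (hcov : ∀ γ ∈ Γ, ∃ (s : ℝ) (B : SL2R), (QuotientGroup.mk B : PSL2R) = γ ∧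
      (B : M2) = c s • (1:M2) + d s • M) : IsCyclic Γ := by
  let f : ℝ → SL2R := fun s =>
    ⟨c s • (1:M2) + d s • M, by rw [det_comb _ _ _ htr]; exact hdet s⟩
  let ψ : ℝ → PSL2R := fun s => QuotientGroup.mk (f s)
  have hhom : ∀ s t, ψ (s + t) = ψ s * ψ t := by
    intro s t
    have : f (s + t) = f s * f t := by
      apply Subtype.ext
      rw [sl_coe_mul]
      show c (s+t) • (1:M2) + d (s+t) • M = _
      rw [comb_mul M htr, hc_add, hd_add]
    show QuotientGroup.mk (f (s+t)) = _
    rw [this]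
    rfl
  have hcontf : Continuous (fun s => (f s : M2)) := by
    apply Continuous.add
    · exact (hc.smul continuous_const)
    · exact (hd.smul continuous_const)
  have hcont : Continuous ψ :=
    continuous_quotient_mk'.comp (continuous_induced_rng.mpr hcontf)
  apply main_param Γ ψ hhom hcont ε hε
  · intro s hs1 hs2 hone
    have hc1 : f s ∈ Subgroup.center SL2R := (QuotientGroup.eq_one_iff (f s)).mp hone
    rcases (mem_center_SL2 _).mp hc1 with h | h
    · have : (f s : M2) = (1:ℝ) • (1:M2) := by rw [h, one_smul]
      exact hker s hs1 hs2 (comb_scalar M hMns _ _ _ this)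
    · have : (f s : M2) = (-1:ℝ) • (1:M2) := by rw [h]; simp
      exact hker s hs1 hs2 (comb_scalar M hMns _ _ _ this)
  · intro γ hγ
    obtain ⟨s, B, hB, hBM⟩ := hcov γ hγ
    refine ⟨s, ?_⟩
    have : f s = B := Subtype.ext hBM.symm
    show QuotientGroup.mk (f s) = γ
    rw [this, hB]

lemma scalar_of_entries (A : M2) (hb : A 0 1 = 0) (hc : A 1 0 = 0) (had : A 0 0 = A 1 1) :
    ∃ r : ℝ, A = r • (1:M2) := by
  refine ⟨A 0 0, ?_⟩
  ext i j
  fin_cases i <;> fin_cases j <;> simp [Matrix.one_apply, hb, hc, ← had]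

lemma commutant (A B : M2) (hA : ¬ ∃ r : ℝ, A = r • (1:M2)) (h : B * A = A * B) :
    ∃ x y : ℝ, B = x • (1:M2) + y • A := by
  have e1 := entry_eq _ _ h 0 0
  have e2 := entry_eq _ _ h 0 1
  have e3 := entry_eq _ _ h 1 0
  have e4 := entry_eq _ _ h 1 1
  simp only [Matrix.mul_apply, Fin.sum_univ_two] at e1 e2 e3 e4
  by_cases hb : A 0 1 ≠ 0
  · refine ⟨B 1 1 - B 0 1 * A 1 1 / A 0 1, B 0 1 / A 0 1, ?_⟩
    ext i j
    fin_cases i <;> fin_cases j <;> simp [Matrix.one_apply] <;> field_simp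
    · linear_combination e2
    · linear_combination -e1
    · ring
  push_neg at hb
  by_cases hc : A 1 0 ≠ 0
  · refine ⟨B 0 0 - B 1 0 * A 0 0 / A 1 0, B 1 0 / A 1 0, ?_⟩
    ext i j
    fin_cases i <;> fin_cases j <;> simp [Matrix.one_apply] <;> field_simp
    · ring
    · linear_combination e1
    · linear_combination e3
  push_neg at hc
  by_cases had : A 0 0 = A 1 1
  · exact absurd (scalar_of_entries A hb hc had) hA
  · have hq : B 0 1 = 0 := by
      have : B 0 1 * (A 1 1 - A 0 0) = 0 := by
        linear_combination e2 - (B 0 0 - B 1 1) * hb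
      rcases mul_eq_zero.mp this with h' | h'
      · exact h'
      · exact absurd (by linarith [sub_eq_zero.mp h']) had
    have hr : B 1 0 = 0 := by
      have : B 1 0 * (A 0 0 - A 1 1) = 0 := by
        linear_combination e3 - (B 1 1 - B 0 0) * hc
      rcases mul_eq_zero.mp this with h' | h'
      · exact h'
      · exact absurd (sub_eq_zero.mp h') had
    refine ⟨B 0 0 - (B 0 0 - B 1 1)/(A 0 0 - A 1 1) * A 0 0, (B 0 0 - B 1 1)/(A 0 0 - A 1 1), ?_⟩
    have hne : A 0 0 - A 1 1 ≠ 0 := sub_ne_zero.mpr had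
    ext i j
    fin_cases i <;> fin_cases j <;> simp [Matrix.one_apply, hb, hc, hq, hr] <;> field_simp
    ring

lemma no_anticommute (A B : M2) (hA : A.det = 1) (hB : B.det = 1)
    (h : B * A = -(A * B)) : False := by
  have hadj : B * B.adjugate = (1 : M2) := by
    rw [Matrix.mul_adjugate, hB, one_smul]
  have htA : A.trace = 0 := by
    have h1 : B * A * B.adjugate = -A := by
      rw [h, Matrix.neg_mul, Matrix.mul_assoc, hadj, Matrix.mul_one]
    have h2 : (B * A * B.adjugate).trace = A.trace := by
      rw [Matrix.trace_mul_comm, ← Matrix.mul_assoc, Matrix.adjugate_mul, hB, one_smul,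
        Matrix.one_mul]
    rw [h1, Matrix.trace_neg] at h2
    linarith
  have htB : B.trace = 0 := by
    have h' : A * B = -(B * A) := by rw [h, neg_neg]
    have hadj' : A * A.adjugate = (1 : M2) := by
      rw [Matrix.mul_adjugate, hA, one_smul]
    have h1 : A * B * A.adjugate = -B := by
      rw [h', Matrix.neg_mul, Matrix.mul_assoc, hadj', Matrix.mul_one]
    have h2 : (A * B * A.adjugate).trace = B.trace := by
      rw [Matrix.trace_mul_comm, ← Matrix.mul_assoc, Matrix.adjugate_mul, hA, one_smul,
        Matrix.one_mul]
    rw [h1, Matrix.trace_neg] at h2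
    linarith
  have htAB : (A * B).trace = 0 := by
    have := congrArg Matrix.trace h
    rw [Matrix.trace_neg, Matrix.trace_mul_comm] at this
    linarith
  rw [Matrix.trace_fin_two] at htA htB htAB
  simp only [Matrix.mul_apply, Fin.sum_univ_two] at htAB
  rw [Matrix.det_fin_two] at hA hB
  have e5 : A 0 1 * A 1 0 = -1 - A 0 0 ^ 2 := by
    linear_combination -hA + A 0 0 * htA
  have e6 : B 0 1 * B 1 0 = -1 - B 0 0 ^ 2 := by
    linear_combination -hB + B 0 0 * htB
  have e7 : A 0 1 * B 1 0 + A 1 0 * B 0 1 = -2 * (A 0 0 * B 0 0) := by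
    linear_combination htAB + B 0 0 * htA - A 1 1 * htB
  have e8 : (A 0 1 * A 1 0) * (B 0 1 * B 1 0) = (-1 - A 0 0 ^ 2) * (-1 - B 0 0 ^ 2) := by
    rw [e5, e6]
  have e9 : (A 0 1 * B 1 0 + A 1 0 * B 0 1) ^ 2 = (2 * (A 0 0 * B 0 0)) ^ 2 := by
    linear_combination (A 0 1 * B 1 0 + A 1 0 * B 0 1 - 2 * (A 0 0 * B 0 0)) * e7
  nlinarith [sq_nonneg (A 0 1 * B 1 0 - A 1 0 * B 0 1), e8, e9,
    sq_nonneg (A 0 0), sq_nonneg (B 0 0), sq_nonneg (A 0 0 * B 0 0)]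

def negSL (X : SL2R) : SL2R :=
  ⟨-(X : M2), by rw [Matrix.det_neg]; simp [X.2]⟩

lemma neg_one_mem_center_SL2 : ∀ (Y : SL2R), (Y : M2) = -1 → Y ∈ Subgroup.center SL2R :=
  fun Y hY => (mem_center_SL2 Y).mpr (Or.inr hY)

lemma mk_eq_mk (X Y : SL2R) :
    (QuotientGroup.mk X : PSL2R) = QuotientGroup.mk Y ↔
      ((X : M2) = (Y : M2) ∨ (X : M2) = -(Y : M2)) := by
  rw [QuotientGroup.eq]
  have hXY : ((X⁻¹ * Y : SL2R) : M2) = (X⁻¹ : SL2R) * (Y : M2) := rfl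
  have hinv : ((X⁻¹ : SL2R) : M2) * (X : M2) = 1 := by
    rw [← sl_coe_mul, inv_mul_cancel]; rfl
  have hinv' : (X : M2) * ((X⁻¹ : SL2R) : M2) = 1 := by
    rw [← sl_coe_mul, mul_inv_cancel]; rfl
  rw [mem_center_SL2]
  constructor
  · rintro (h | h)
    · left
      have : (X : M2) * ((X⁻¹ : SL2R) * (Y : M2)) = (X : M2) * 1 := by
        rw [← hXY, h]
      rw [← mul_assoc, hinv', one_mul, mul_one] at this
      exact this.symm
    · right
      have : (X : M2) * ((X⁻¹ : SL2R) * (Y : M2)) = (X : M2) * (-1) := by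
        rw [← hXY, h]
      rw [← mul_assoc, hinv', one_mul, mul_neg_one] at this
      rw [this, neg_neg]
  · rintro (h | h)
    · left
      rw [hXY, ← h, hinv]
    · right
      have hY : (Y : M2) = -(X : M2) := by rw [h, neg_neg]
      rw [hXY, hY, mul_neg, hinv]

lemma exists_cos_sin (x y : ℝ) (h : x^2 + y^2 = 1) :
    ∃ θ : ℝ, Real.cos θ = x ∧ Real.sin θ = y := by
  have habs : ‖(⟨x, y⟩ : ℂ)‖ = 1 := by
    rw [Complex.norm_def, Complex.normSq_mk]
    rw [show x * x + y * y = 1 by nlinarith]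
    exact Real.sqrt_one
  have hz : (⟨x, y⟩ : ℂ) ≠ 0 := by
    intro h0
    rw [h0] at habs
    simp at habs
  refine ⟨Complex.arg ⟨x, y⟩, ?_, ?_⟩
  · rw [Complex.cos_arg hz, habs]; simp
  · rw [Complex.sin_arg, habs]; simp

/-- If `Γ` is a discrete subgroup of `PSL₂(ℝ)` whose center is
nontrivial, then `Γ` is cyclic; equivalently, the center of a discrete subgroup
of `PSL₂(ℝ)` is trivial unless the subgroup is cyclic. -/
theorem discrete_subgroup_with_center_is_cyclic (Γ : Subgroup PSL2R)
    [DiscreteTopology Γ] (h : Subgroup.center Γ ≠ ⊥) : IsCyclic Γ := by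
  obtain ⟨z, hz1⟩ := Subgroup.ne_bot_iff_exists_ne_one.mp h
  have hz0ne : ((z : Γ) : PSL2R) ≠ 1 := by
    intro hh
    exact hz1 (Subtype.ext (Subtype.ext hh))
  obtain ⟨A, hA⟩ := QuotientGroup.mk_surjective ((z : Γ) : PSL2R)
  have hAZ : A ∉ Subgroup.center SL2R := by
    intro hc
    exact hz0ne (by rw [← hA]; exact (QuotientGroup.eq_one_iff A).mpr hc)
  have hAns : ¬ ∃ r : ℝ, (A : M2) = r • (1 : M2) := by
    rintro ⟨r, hr⟩
    have hdet := A.2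
    rw [hr, Matrix.det_smul, Matrix.det_one] at hdet
    simp at hdet
    have : r ^ 2 = 1 := by simpa using hdet
    rcases sq_eq_one_iff.mp this with h' | h' <;>
      apply hAZ <;> apply (mem_center_SL2 A).mpr
    · left; rw [hr, h', one_smul]
    · right; rw [hr, h']; simp
  set t : ℝ := Matrix.trace (A : M2) with ht
  set M : M2 := (A : M2) - (t/2) • 1 with hMdef
  have htr : M.trace = 0 := by
    rw [hMdef, Matrix.trace_sub, Matrix.trace_smul, Matrix.trace_one]
    simp [ht]
  have hAM : (A : M2) = (t/2) • 1 + M := by rw [hMdef]; module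
  have hMns : ¬ ∃ r : ℝ, M = r • (1 : M2) := by
    rintro ⟨r, hr⟩
    exact hAns ⟨r + t/2, by rw [hAM, hr, add_smul]; module⟩
  set δ : ℝ := M.det with hδdef
  have hrep : ∀ γ ∈ Γ, ∃ (x y : ℝ) (B : SL2R),
      (QuotientGroup.mk B : PSL2R) = γ ∧ (B : M2) = x • (1:M2) + y • M ∧
      x^2 + y^2 * δ = 1 := by
    intro γ hγ
    obtain ⟨B, hB⟩ := QuotientGroup.mk_surjective γ
    have hcomm : γ * ((z : Γ) : PSL2R) = ((z : Γ) : PSL2R) * γ := by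
      exact congrArg Subtype.val (Subgroup.mem_center_iff.mp z.2 ⟨γ, hγ⟩)
    rw [← hB, ← hA] at hcomm
    have hmk : (QuotientGroup.mk (B * A) : PSL2R) = QuotientGroup.mk (A * B) := by
      rw [QuotientGroup.mk_mul, QuotientGroup.mk_mul]
      exact hcomm
    rcases (mk_eq_mk _ _).mp hmk with hcm | hcm
    · rw [sl_coe_mul, sl_coe_mul] at hcm
      obtain ⟨x, y, hxy⟩ := commutant _ _ hAns hcm
      have hBM : (B : M2) = (x + y*(t/2)) • (1:M2) + y • M := by
        rw [hxy, hAM]; module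
      refine ⟨x + y*(t/2), y, B, hB, hBM, ?_⟩
      rw [← det_comb _ _ _ htr, ← hBM]
      exact B.2
    · rw [sl_coe_mul, sl_coe_mul] at hcm
      exact absurd hcm (fun hh => no_anticommute _ _ A.2 B.2 hh)
  have hnegcov : ∀ (B : SL2R) (x y : ℝ), (B : M2) = x • (1:M2) + y • M →
      ∃ B' : SL2R, (QuotientGroup.mk B' : PSL2R) = QuotientGroup.mk B ∧
        (B' : M2) = (-x) • (1:M2) + (-y) • M := by
    intro B x y hBM
    refine ⟨negSL B, ?_, ?_⟩
    · exact (mk_eq_mk _ _).mpr (Or.inr rfl)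
    · show -(B : M2) = _
      rw [hBM]; module
  rcases lt_trichotomy δ 0 with hδ | hδ | hδ
  · -- hyperbolic case
    set k : ℝ := Real.sqrt (-δ) with hkdef
    have hk : 0 < k := Real.sqrt_pos.mpr (by linarith)
    have hk2 : k^2 = -δ := Real.sq_sqrt (by linarith)
    have hδk : δ = -k^2 := by linarith
    apply param_case Γ M htr hMns Real.cosh (fun s => Real.sinh s / k)
      Real.continuous_cosh (Real.continuous_sinh.div_const k)
    · intro s
      rw [← hδdef, hδk, div_pow]
      have := Real.cosh_sq_sub_sinh_sq s
      field_simp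
      linear_combination this
    · intro s u
      rw [← hδdef, hδk, Real.cosh_add]
      field_simp
      ring
    · intro s u
      rw [Real.sinh_add]
      ring
    · exact (zero_lt_one : (0:ℝ) < 1)
    · intro s hs1 _
      exact div_ne_zero (Real.sinh_ne_zero.mpr (ne_of_gt hs1)) (ne_of_gt hk)
    · intro γ hγ
      obtain ⟨x, y, B, hB, hBM, hxyδ⟩ := hrep γ hγ
      have key : ∀ (x y : ℝ) (B : SL2R), (QuotientGroup.mk B : PSL2R) = γ →
          (B : M2) = x • (1:M2) + y • M → x^2 + y^2 * δ = 1 → 0 < x →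
          ∃ (s : ℝ) (B' : SL2R), (QuotientGroup.mk B' : PSL2R) = γ ∧
            (B' : M2) = Real.cosh s • (1:M2) + (Real.sinh s / k) • M := by
        intro x y B hB hBM hxyδ hx
        refine ⟨Real.arsinh (k * y), B, hB, ?_⟩
        have h1 : Real.sinh (Real.arsinh (k*y)) = k * y := Real.sinh_arsinh _
        have h2 : Real.cosh (Real.arsinh (k*y)) = x := by
          rw [Real.cosh_arsinh]
          rw [show 1 + (k*y)^2 = x^2 by rw [hδk] at hxyδ; ring_nf; ring_nf at hxyδ; nlinarith [hxyδ]]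
          exact Real.sqrt_sq hx.le
        rw [h1, h2, mul_div_cancel_left₀ _ (ne_of_gt hk)]
        exact hBM
      have hx2 : x^2 ≥ 1 := by nlinarith [hxyδ, hδk, sq_nonneg (k*y)]
      rcases lt_or_ge 0 x with hx | hx
      · exact key x y B hB hBM hxyδ hx
      · obtain ⟨B', hB', hB'M⟩ := hnegcov B x y hBM
        refine key (-x) (-y) B' (by rw [hB', hB]) hB'M (by ring_nf; ring_nf at hxyδ; linarith [hxyδ]) (by nlinarith [hx2])
  · -- parabolic case
    apply param_case Γ M htr hMns (fun _ => (1:ℝ)) (fun s => s)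
      continuous_const continuous_id
    · intro s; rw [← hδdef, hδ]; ring
    · intro s u; rw [← hδdef, hδ]; ring
    · intro s u; ring
    · exact (zero_lt_one : (0:ℝ) < 1)
    · intro s hs1 _; exact ne_of_gt hs1
    · intro γ hγ
      obtain ⟨x, y, B, hB, hBM, hxyδ⟩ := hrep γ hγ
      have hx2 : x^2 = 1 := by rw [hδ] at hxyδ; linarith [hxyδ]
      rcases sq_eq_one_iff.mp hx2 with hx | hx
      · refine ⟨y, B, hB, ?_⟩
        rw [hBM, hx]
      · obtain ⟨B', hB', hB'M⟩ := hnegcov B x y hBM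
        refine ⟨-y, B', by rw [hB', hB], ?_⟩
        rw [hB'M, hx]; norm_num
  · -- elliptic case
    set m : ℝ := Real.sqrt δ with hmdef
    have hm : 0 < m := Real.sqrt_pos.mpr hδ
    have hm2 : m^2 = δ := Real.sq_sqrt hδ.le
    apply param_case Γ M htr hMns Real.cos (fun s => Real.sin s / m)
      Real.continuous_cos (Real.continuous_sin.div_const m)
    · intro s
      rw [← hδdef, ← hm2, div_pow]
      have := Real.sin_sq_add_cos_sq s
      field_simp
      linear_combination this
    · intro s u
      rw [← hδdef, ← hm2, Real.cos_add]
      field_simp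
      try ring
    · intro s u
      rw [Real.sin_add]
      ring
    · exact Real.pi_pos
    · intro s hs1 hs2
      exact div_ne_zero (ne_of_gt (Real.sin_pos_of_pos_of_lt_pi hs1 hs2)) (ne_of_gt hm)
    · intro γ hγ
      obtain ⟨x, y, B, hB, hBM, hxyδ⟩ := hrep γ hγ
      obtain ⟨θ, hcos, hsin⟩ := exists_cos_sin x (m*y)
        (by rw [← hm2] at hxyδ; ring_nf; ring_nf at hxyδ; linarith [hxyδ])
      refine ⟨θ, B, hB, ?_⟩
      rw [hcos, hsin, mul_div_cancel_left₀ _ (ne_of_gt hm)]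
      exact hBM
end
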